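/- Let g ∈ ℤ[X_1,…,X_n] be a polynomial whose image in (AlgebraicClosure ℚ)[X_1,…,X_n] is irreducible (i.e., g is absolutely irreducible over ℚ). Then for all but finitely many primes p, the image of g in (AlgebraicClosure 𝔽_p)[X_1,…,X_n] under coefficientwise reduction modulo p is irreducible. -/

import Mathlib

open MvPolynomial FirstOrder Language Ring FreeCommRing BoundedFormula

section AuxAlgebra

theorem AI_degreeOf_le_left {K : Type*} [CommRing K] [IsDomain K] {n : ℕ} (i : Fin n)
    (a b : MvPolynomial (Fin n) K) (h : a * b ≠ 0) : degreeOf i a ≤ degreeOf i (a * b) := by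
  induction n with
  | zero => exact i.elim0
  | succ m _ =>
    have key : ∀ (a b : MvPolynomial (Fin (m+1)) K), a * b ≠ 0 →
        degreeOf 0 a ≤ degreeOf 0 (a * b) := by
      intro a b hab
      rw [← natDegree_finSuccEquiv, ← natDegree_finSuccEquiv]
      refine Polynomial.natDegree_le_of_dvd ⟨finSuccEquiv K m b, by rw [map_mul]⟩ ?_
      exact (map_ne_zero_iff _ (AlgEquiv.injective _)).2 hab
    have hswap := Equiv.injective (Equiv.swap i 0)
    rw [← degreeOf_rename_of_injective hswap i, ← degreeOf_rename_of_injective hswap i,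
      Equiv.swap_apply_left, map_mul]
    refine key _ _ ?_
    rw [← map_mul]
    exact fun hc => h ((map_eq_zero_iff _ (rename_injective _ hswap)).1 hc)

theorem AI_isUnit_iff {K : Type*} [Field K] {n : ℕ} (p : MvPolynomial (Fin n) K) :
    IsUnit p ↔ p ≠ 0 ∧ ∀ m : Fin n →₀ ℕ, m ≠ 0 → coeff m p = 0 := by
  constructor
  · intro h
    refine ⟨h.ne_zero, fun m hm => ?_⟩
    obtain ⟨u, rfl⟩ := h
    by_contra hc
    have hmem : m ∈ (u : MvPolynomial (Fin n) K).support := mem_support_iff.2 hc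
    have h1 : (u : MvPolynomial (Fin n) K) * (↑u⁻¹ : MvPolynomial (Fin n) K) = 1 := u.mul_inv
    obtain ⟨i, hi⟩ : ∃ i, m i ≠ 0 := by
      by_contra hc2
      push_neg at hc2
      exact hm (Finsupp.ext hc2)
    have := monomial_le_degreeOf i hmem
    have h2 : degreeOf i ((u : MvPolynomial (Fin n) K) * (↑u⁻¹ : MvPolynomial (Fin n) K)) = 0 := by
      rw [h1, ← C_1, degreeOf_C]
    have := AI_degreeOf_le_left i (u : MvPolynomial (Fin n) K) (↑u⁻¹) (by rw [h1]; exact one_ne_zero)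
    omega
  · rintro ⟨h0, h⟩
    have hp : p = C (coeff 0 p) := by
      ext m
      rcases eq_or_ne m 0 with rfl | hm
      · simp [coeff_C]
      · rw [h m hm, coeff_C, if_neg (Ne.symm hm)]
    have hc : coeff 0 p ≠ 0 := fun hc => h0 (by rw [hp, hc, map_zero])
    rw [hp]
    exact (isUnit_iff_ne_zero.2 hc).map C

theorem AI_isUnit_iff' {K : Type*} [Field K] {n : ℕ} (p : MvPolynomial (Fin n) K) :
    IsUnit p ↔ (∀ m : Fin n →₀ ℕ, m ≠ 0 → coeff m p = 0) ∧ coeff 0 p ≠ 0 := by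
  rw [AI_isUnit_iff]
  constructor
  · rintro ⟨h0, h⟩
    refine ⟨h, fun hc => h0 ?_⟩
    ext m
    rcases eq_or_ne m 0 with rfl | hm
    · simpa using hc
    · simp [h m hm]
  · rintro ⟨h, h0⟩
    exact ⟨fun hc => h0 (by rw [hc, coeff_zero]), h⟩

theorem AI_degreeOf_map_le {R S : Type*} [CommRing R] [CommRing S] (f : R →+* S) {n : ℕ}
    (i : Fin n) (p : MvPolynomial (Fin n) R) : degreeOf i (map f p) ≤ degreeOf i p := by
  rw [degreeOf_eq_sup, degreeOf_eq_sup]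
  exact Finset.sup_mono (support_map_subset _ _)

end AuxAlgebra

section Defs

variable {n : ℕ}

/-- Bound on exponents of `g` and of its divisors. -/
noncomputable def AI_B (g : MvPolynomial (Fin n) ℤ) : Fin n →₀ ℕ :=
  Finsupp.equivFunOnFinite.symm (fun i => degreeOf i g)

noncomputable def AI_D (g : MvPolynomial (Fin n) ℤ) : Finset (Fin n →₀ ℕ) :=
  Finset.Iic (AI_B g)

noncomputable abbrev AI_gam (g : MvPolynomial (Fin n) ℤ) : Type :=
  Fin 2 × {m // m ∈ AI_D g}

theorem AI_B_apply (g : MvPolynomial (Fin n) ℤ) (i : Fin n) : AI_B g i = degreeOf i g := rfl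

theorem AI_mem_D_iff (g : MvPolynomial (Fin n) ℤ) (m : Fin n →₀ ℕ) :
    m ∈ AI_D g ↔ ∀ i, m i ≤ degreeOf i g := by
  rw [AI_D, Finset.mem_Iic, Finsupp.le_def]
  exact forall_congr' fun i => by rw [AI_B_apply]

theorem AI_support_subset (g : MvPolynomial (Fin n) ℤ) : g.support ⊆ AI_D g := fun m hm =>
  (AI_mem_D_iff g m).2 fun i => monomial_le_degreeOf i hm

noncomputable def AI_poly {K : Type*} [CommRing K] (g : MvPolynomial (Fin n) ℤ)
    (j : Fin 2) (x : AI_gam g → K) : MvPolynomial (Fin n) K :=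
  ∑ m ∈ (AI_D g).attach, monomial (m : Fin n →₀ ℕ) (x (j, m))

theorem AI_coeff_poly {K : Type*} [CommRing K] (g : MvPolynomial (Fin n) ℤ)
    (j : Fin 2) (x : AI_gam g → K) (m : Fin n →₀ ℕ) :
    coeff m (AI_poly g j x) = if h : m ∈ AI_D g then x (j, ⟨m, h⟩) else 0 := by
  classical
  rw [AI_poly, coeff_sum]
  simp only [coeff_monomial]
  split
  · next h =>
    rw [Finset.sum_eq_single (⟨m, h⟩ : {m // m ∈ AI_D g})]
    · simp
    · intro b _ hb
      rw [if_neg]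
      exact fun hc => hb (Subtype.ext hc)
    · simp
  · next h =>
    refine Finset.sum_eq_zero fun b _ => ?_
    rw [if_neg]
    exact fun hc => h (hc ▸ b.2)

/-- The coefficient of `X^μ` in the product of two generic polynomials with support
in `AI_D g`, as an element of the free commutative ring. -/
noncomputable def AI_prodElem (g : MvPolynomial (Fin n) ℤ) (μ : Fin n →₀ ℕ) :
    FreeCommRing (AI_gam g) :=
  ∑ p ∈ ((AI_D g).attach ×ˢ (AI_D g).attach).filter
      (fun p => (p.1 : Fin n →₀ ℕ) + (p.2 : Fin n →₀ ℕ) = μ),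
    of (0, p.1) * of (1, p.2)

theorem AI_lift_prodElem {K : Type*} [CommRing K] (g : MvPolynomial (Fin n) ℤ)
    (μ : Fin n →₀ ℕ) (x : AI_gam g → K) :
    FreeCommRing.lift x (AI_prodElem g μ) =
      coeff μ (AI_poly g 0 x * AI_poly g 1 x) := by
  classical
  rw [AI_prodElem, map_sum, coeff_mul]
  simp only [map_mul, lift_of]
  have h1 : ∑ q ∈ Finset.HasAntidiagonal.antidiagonal μ, coeff q.1 (AI_poly g 0 x) * coeff q.2 (AI_poly g 1 x)
      = ∑ q ∈ (Finset.HasAntidiagonal.antidiagonal μ).filter (fun q => q.1 ∈ AI_D g ∧ q.2 ∈ AI_D g),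
          coeff q.1 (AI_poly g 0 x) * coeff q.2 (AI_poly g 1 x) := by
    refine (Finset.sum_filter_of_ne fun q _ hq => ?_).symm
    rw [AI_coeff_poly, AI_coeff_poly] at hq
    constructor
    · by_contra hc
      rw [dif_neg hc, zero_mul] at hq
      exact hq rfl
    · by_contra hc
      rw [dif_neg hc, mul_zero] at hq
      exact hq rfl
  rw [h1]
  refine Finset.sum_bij' (fun p _ => ((p.1 : Fin n →₀ ℕ), (p.2 : Fin n →₀ ℕ)))
    (fun q hq => (⟨q.1, (Finset.mem_filter.1 hq).2.1⟩, ⟨q.2, (Finset.mem_filter.1 hq).2.2⟩))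
    ?_ ?_ ?_ ?_ ?_
  · intro p hp
    simp only [Finset.mem_filter, Finset.mem_product, Finset.mem_attach, true_and,
      Finset.HasAntidiagonal.mem_antidiagonal] at hp ⊢
    exact ⟨hp, p.1.2, p.2.2⟩
  · intro q hq
    simp only [Finset.mem_filter, Finset.mem_product, Finset.mem_attach, true_and,
      Finset.HasAntidiagonal.mem_antidiagonal] at hq ⊢
    exact hq.1
  · intro p hp; rfl
  · intro q hq; rfl
  · intro p hp
    rw [AI_coeff_poly, AI_coeff_poly, dif_pos p.1.2, dif_pos p.2.2]

noncomputable def AI_tm (g : MvPolynomial (Fin n) ℤ) (t : FreeCommRing (AI_gam g)) :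
    Language.ring.Term ((AI_gam g) ⊕ Fin 0) :=
  (termOfFreeCommRing t).relabel Sum.inl

theorem AI_realize_tm_eq {K : Type*} [CommRing K] [CompatibleRing K]
    (g : MvPolynomial (Fin n) ℤ) (t s : FreeCommRing (AI_gam g)) (v : AI_gam g → K)
    (xs : Fin 0 → K) :
    BoundedFormula.Realize (AI_tm g t =' AI_tm g s) v xs ↔
      FreeCommRing.lift v t = FreeCommRing.lift v s := by
  simp [AI_tm, Term.realize_relabel, Sum.elim_comp_inl]

noncomputable def AI_iInf {L : Language} {β α : Type*} {k : ℕ} (s : Finset β)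
    (f : β → L.BoundedFormula α k) : L.BoundedFormula α k :=
  BoundedFormula.iInf (fun b : s => f b)

theorem AI_realize_iInf {L : Language} {M : Type*} [L.Structure M] {β α : Type*} {k : ℕ}
    (s : Finset β) (f : β → L.BoundedFormula α k) (v : α → M) (xs : Fin k → M) :
    (AI_iInf s f).Realize v xs ↔ ∀ b ∈ s, (f b).Realize v xs := by
  rw [AI_iInf, BoundedFormula.realize_iInf]
  exact ⟨fun h b hb => h ⟨b, hb⟩, fun h b => h b b.2⟩

noncomputable def AI_eqs (g : MvPolynomial (Fin n) ℤ) : Language.ring.Formula (AI_gam g) :=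
  AI_iInf (Finset.Iic (AI_B g + AI_B g)) (fun μ =>
    AI_tm g (AI_prodElem g μ) =' AI_tm g (↑(coeff μ g) : FreeCommRing (AI_gam g)))

open Classical in
noncomputable def AI_unitF (g : MvPolynomial (Fin n) ℤ) (j : Fin 2) :
    Language.ring.Formula (AI_gam g) :=
  AI_iInf (AI_D g).attach (fun m =>
    if (m : Fin n →₀ ℕ) = 0 then AI_tm g 0 =' AI_tm g 0
    else AI_tm g (of (j, m)) =' AI_tm g 0)

noncomputable def AI_zeroF (g : MvPolynomial (Fin n) ℤ) : Language.ring.Formula (AI_gam g) :=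
  AI_iInf g.support (fun μ => AI_tm g (↑(coeff μ g) : FreeCommRing (AI_gam g)) =' AI_tm g 0)

noncomputable def AI_unitGF (g : MvPolynomial (Fin n) ℤ) : Language.ring.Formula (AI_gam g) :=
  (AI_iInf (g.support.erase 0)
    (fun μ => AI_tm g (↑(coeff μ g) : FreeCommRing (AI_gam g)) =' AI_tm g 0)) ⊓
  ∼(AI_tm g (↑(coeff 0 g) : FreeCommRing (AI_gam g)) =' AI_tm g 0)

/-- A sentence in the language of rings expressing that (the image of) `g` is irreducible. -/
noncomputable def AI_sentence (g : MvPolynomial (Fin n) ℤ) : Language.ring.Sentence :=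
  Formula.iAlls (AI_gam g) (Formula.relabel (Sum.inr : AI_gam g → Empty ⊕ AI_gam g)
    ((∼(AI_zeroF g)) ⊓ ((∼(AI_unitGF g)) ⊓
      ((AI_eqs g) ⟹ ((AI_unitF g 0) ⊔ (AI_unitF g 1))))))

end Defs

section Realize

variable {n : ℕ} {K : Type*} [CommRing K] [CompatibleRing K]

theorem AI_realize_zeroF (g : MvPolynomial (Fin n) ℤ) (v : AI_gam g → K) :
    Formula.Realize (AI_zeroF g) v ↔ MvPolynomial.map (Int.castRingHom K) g = 0 := by
  rw [AI_zeroF, Formula.Realize, AI_realize_iInf]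
  simp only [AI_realize_tm_eq, map_intCast, map_zero]
  constructor
  · intro h
    ext μ
    rw [coeff_map, coeff_zero]
    by_cases hμ : μ ∈ g.support
    · exact h μ hμ
    · rw [notMem_support_iff.1 hμ]; simp
  · intro h μ _
    have := congrArg (coeff μ) h
    rwa [coeff_map, coeff_zero] at this

theorem AI_realize_unitGF [IsDomain K] (g : MvPolynomial (Fin n) ℤ) (v : AI_gam g → K) :
    Formula.Realize (AI_unitGF g) v ↔
      ((∀ m : Fin n →₀ ℕ, m ≠ 0 → coeff m (MvPolynomial.map (Int.castRingHom K) g) = 0) ∧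
        coeff 0 (MvPolynomial.map (Int.castRingHom K) g) ≠ 0) := by
  rw [AI_unitGF, Formula.Realize, realize_inf, realize_not, AI_realize_iInf]
  simp only [AI_realize_tm_eq, map_intCast, map_zero, coeff_map,
    Int.coe_castRingHom]
  constructor
  · rintro ⟨h1, h2⟩
    refine ⟨fun m hm => ?_, h2⟩
    by_cases hmem : m ∈ g.support
    · exact h1 m (Finset.mem_erase.2 ⟨hm, hmem⟩)
    · rw [notMem_support_iff.1 hmem]; simp
  · rintro ⟨h1, h2⟩
    exact ⟨fun m hm => h1 m (Finset.mem_erase.1 hm).1, h2⟩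

theorem AI_realize_eqs (g : MvPolynomial (Fin n) ℤ) (v : AI_gam g → K) :
    Formula.Realize (AI_eqs g) v ↔
      AI_poly g 0 v * AI_poly g 1 v = MvPolynomial.map (Int.castRingHom K) g := by
  rw [AI_eqs, Formula.Realize, AI_realize_iInf]
  simp only [AI_realize_tm_eq, AI_lift_prodElem, map_intCast]
  constructor
  · intro h
    ext μ
    simp only [coeff_map, Int.coe_castRingHom]
    by_cases hμ : μ ∈ Finset.Iic (AI_B g + AI_B g)
    · exact h μ hμ
    · have hg0 : coeff μ g = 0 := by
        by_contra hc
        refine hμ (Finset.mem_Iic.2 ?_)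
        calc μ ≤ AI_B g := Finset.mem_Iic.1 (AI_support_subset g (mem_support_iff.2 hc))
        _ ≤ AI_B g + AI_B g := le_add_self
      rw [hg0, Int.cast_zero, coeff_mul]
      refine Finset.sum_eq_zero fun q hq => ?_
      rw [AI_coeff_poly, AI_coeff_poly]
      by_cases h1 : q.1 ∈ AI_D g
      · by_cases h2 : q.2 ∈ AI_D g
        · exfalso
          refine hμ (Finset.mem_Iic.2 ?_)
          rw [← Finset.HasAntidiagonal.mem_antidiagonal.1 hq]
          exact add_le_add (Finset.mem_Iic.1 h1) (Finset.mem_Iic.1 h2)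
        · rw [dif_neg h2, mul_zero]
      · rw [dif_neg h1, zero_mul]
  · intro h μ _
    simp only [h, coeff_map, Int.coe_castRingHom]

theorem AI_realize_unitF (g : MvPolynomial (Fin n) ℤ) (j : Fin 2) (v : AI_gam g → K) :
    Formula.Realize (AI_unitF g j) v ↔
      ∀ m : {m // m ∈ AI_D g}, (m : Fin n →₀ ℕ) ≠ 0 → v (j, m) = 0 := by
  rw [AI_unitF, Formula.Realize, AI_realize_iInf]
  constructor
  · intro h m hm
    have := h m (Finset.mem_attach _ _)
    rw [if_neg hm, AI_realize_tm_eq] at this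
    simpa using this
  · intro h m _
    split_ifs with h0
    · rw [AI_realize_tm_eq]
    · rw [AI_realize_tm_eq]
      simpa using h m h0

theorem AI_realize_sentence {K : Type*} [Field K] [CompatibleRing K] {n : ℕ}
    (g : MvPolynomial (Fin n) ℤ) :
    K ⊨ AI_sentence g ↔ Irreducible (MvPolynomial.map (Int.castRingHom K) g) := by
  classical
  set gK := MvPolynomial.map (Int.castRingHom K) g with hgK
  rw [AI_sentence, Sentence.Realize, Formula.realize_iAlls]
  simp only [Formula.realize_relabel, Sum.elim_comp_inr, Sum.elim_inr, Formula.realize_inf, Formula.realize_not, Formula.realize_imp,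
    Formula.realize_sup, AI_realize_zeroF, AI_realize_unitGF, AI_realize_eqs,
    AI_realize_unitF, ← hgK]
  constructor
  · intro h
    have h0 := h (fun _ => 0)
    refine ⟨fun hu => h0.2.1 ((AI_isUnit_iff' gK).1 hu), fun a b hab => ?_⟩
    have hab' : a * b = gK := hab.symm
    have habne : a * b ≠ 0 := hab' ▸ h0.1
    have hsa : ∀ m ∈ a.support, m ∈ AI_D g := by
      intro m hm
      refine (AI_mem_D_iff g m).2 fun i => ?_
      calc m i ≤ degreeOf i a := monomial_le_degreeOf i hm
        _ ≤ degreeOf i (a * b) := AI_degreeOf_le_left i a b habne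
        _ = degreeOf i gK := by rw [hab']
        _ ≤ degreeOf i g := AI_degreeOf_map_le _ i g
    have hsb : ∀ m ∈ b.support, m ∈ AI_D g := by
      intro m hm
      refine (AI_mem_D_iff g m).2 fun i => ?_
      calc m i ≤ degreeOf i b := monomial_le_degreeOf i hm
        _ ≤ degreeOf i (b * a) := AI_degreeOf_le_left i b a (by rwa [mul_comm])
        _ = degreeOf i gK := by rw [mul_comm, hab']
        _ ≤ degreeOf i g := AI_degreeOf_map_le _ i g
    set x : AI_gam g → K := fun q => if q.1 = 0 then coeff (q.2 : Fin n →₀ ℕ) a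
      else coeff (q.2 : Fin n →₀ ℕ) b with hx
    have hPa : AI_poly g 0 x = a := by
      ext m
      rw [AI_coeff_poly]
      split
      · simp [hx]
      · next hmem =>
        symm
        rw [← notMem_support_iff]
        exact fun hc => hmem (hsa m hc)
    have hPb : AI_poly g 1 x = b := by
      ext m
      rw [AI_coeff_poly]
      split
      · simp [hx]
      · next hmem =>
        symm
        rw [← notMem_support_iff]
        exact fun hc => hmem (hsb m hc)
    have key := (h x).2.2 (by rw [hPa, hPb]; exact hab')
    rcases key with hk | hk
    · left
      refine (AI_isUnit_iff' a).2 ⟨fun m hm => ?_, fun hc => ?_⟩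
      · by_cases hmem : m ∈ AI_D g
        · have := hk ⟨m, hmem⟩ hm
          simpa [hx] using this
        · rw [← notMem_support_iff]
          exact fun hc => hmem (hsa m hc)
      · refine h0.1 ?_
        rw [← hab']
        have ha0 : a = 0 := by
          ext m
          rcases eq_or_ne m 0 with rfl | hm
          · simpa using hc
          · by_cases hmem : m ∈ AI_D g
            · simpa [hx] using hk ⟨m, hmem⟩ hm
            · exact notMem_support_iff.1 fun hc2 => hmem (hsa m hc2)
        rw [ha0, zero_mul]
    · right
      refine (AI_isUnit_iff' b).2 ⟨fun m hm => ?_, fun hc => ?_⟩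
      · by_cases hmem : m ∈ AI_D g
        · have := hk ⟨m, hmem⟩ hm
          simpa [hx] using this
        · rw [← notMem_support_iff]
          exact fun hc => hmem (hsb m hc)
      · refine h0.1 ?_
        rw [← hab']
        have hb0 : b = 0 := by
          ext m
          rcases eq_or_ne m 0 with rfl | hm
          · simpa using hc
          · by_cases hmem : m ∈ AI_D g
            · simpa [hx] using hk ⟨m, hmem⟩ hm
            · exact notMem_support_iff.1 fun hc2 => hmem (hsb m hc2)
        rw [hb0, mul_zero]
  · intro h x
    refine ⟨h.ne_zero, fun hu => h.not_isUnit ((AI_isUnit_iff' gK).2 hu), fun heq => ?_⟩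
    rcases h.isUnit_or_isUnit heq.symm with hu | hu
    · left
      intro m hm
      have := ((AI_isUnit_iff' _).1 hu).1 (m : Fin n →₀ ℕ) hm
      rwa [AI_coeff_poly, dif_pos m.2] at this
    · right
      intro m hm
      have := ((AI_isUnit_iff' _).1 hu).1 (m : Fin n →₀ ℕ) hm
      rwa [AI_coeff_poly, dif_pos m.2] at this

end Realize

/-- **Absolute irreducibility is preserved modulo all but finitely many primes.**
If `g ∈ ℤ[X_1,…,X_n]` is irreducible over `AlgebraicClosure ℚ`, then for all primes `p`
outside a finite exceptional set, the reduction of `g` modulo `p` is irreducible over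
`AlgebraicClosure 𝔽_p`. -/
theorem abs_irreducible_mod_p_cofinitely {n : ℕ} (g : MvPolynomial (Fin n) ℤ)
    (hg : Irreducible (MvPolynomial.map (Int.castRingHom (AlgebraicClosure ℚ)) g)) :
    ∃ S : Finset ℕ, ∀ (p : ℕ) [Fact p.Prime], p ∉ S →
      Irreducible (MvPolynomial.map
        ((algebraMap (ZMod p) (AlgebraicClosure (ZMod p))).comp
          (Int.castRingHom (ZMod p))) g) := by
  classical
  letI := compatibleRingOfRing (AlgebraicClosure ℚ)
  haveI : CharZero (AlgebraicClosure ℚ) :=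
    charZero_of_injective_algebraMap (algebraMap ℚ (AlgebraicClosure ℚ)).injective
  haveI : CharP (AlgebraicClosure ℚ) 0 := CharP.ofCharZero _
  have hACF0 : Theory.ACF 0 ⊨ᵇ AI_sentence g := by
    rw [← (Field.ACF_isComplete (Or.inr rfl)).realize_sentence_iff _ (AlgebraicClosure ℚ),
      AI_realize_sentence]
    exact hg
  have hfin := Field.finite_ACF_prime_not_realize_of_ACF_zero_realize _ hACF0
  refine ⟨hfin.toFinset.image (fun q : Nat.Primes => q.1), ?_⟩
  intro p hp hpS
  letI := compatibleRingOfRing (AlgebraicClosure (ZMod p))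
  haveI : CharP (AlgebraicClosure (ZMod p)) p :=
    charP_of_injective_algebraMap
      (algebraMap (ZMod p) (AlgebraicClosure (ZMod p))).injective p
  have hmod : Theory.ACF p ⊨ᵇ AI_sentence g := by
    by_contra hc
    exact hpS (Finset.mem_image.2 ⟨(⟨p, Fact.out⟩ : Nat.Primes), hfin.mem_toFinset.2 hc, rfl⟩)
  rw [← (Field.ACF_isComplete (Or.inl Fact.out)).realize_sentence_iff _
    (AlgebraicClosure (ZMod p)), AI_realize_sentence] at hmod
  rwa [RingHom.ext_int ((algebraMap (ZMod p) (AlgebraicClosure (ZMod p))).comp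
    (Int.castRingHom (ZMod p))) (Int.castRingHom (AlgebraicClosure (ZMod p)))]
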